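/- Convexity of vacancy numbers: for an unrestricted rigged configuration with vacancy numbers p_j^{(a)}, if the partition ν^{(a)} has no part of length j (i.e., m_j^{(a)} = 0), then p_j^{(a)} ≥ min(p_{j-1}^{(a)}, p_{j+1}^{(a)}); more precisely, the sequence j ↦ p_j^{(a)} satisfies −p_{j-1}^{(a)} + 2 p_j^{(a)} − p_{j+1}^{(a)} ≥ −Σ_{i=1}^{L} δ_{a,r_i} δ_{j,s_i} whenever m_j^{(a)} = 0. -/
import Mathlib


open scoped BigOperators

/-- A (raw) rigged configuration for type `A_{n-1}`: a sequence of partitions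
`ν^{(1)},…,ν^{(n-1)}` together with an integer rigging attached to each part;
component `a : Fin (n-1)` is the multiset of pairs `(length of part, rigging)`. -/
abbrev RCConf (n : ℕ) := Fin (n - 1) → Multiset (ℕ × ℤ)

/-- The Cartan matrix pairing `(α_a | α_b)` of `A_{n-1}`:
`2` if `a = b`, `-1` if `|a-b| = 1`, `0` otherwise. -/
def cartan (a b : ℕ) : ℤ := if a = b then 2 else if a + 1 = b ∨ b + 1 = a then -1 else 0

/-- The vacancy numbers
`p_j^{(a)}(ν) = ∑_{i=1}^L min(j,s_i) δ_{a,r_i} − ∑_b (α_a|α_b) ∑_{k≥1} min(j,k) m_k^{(b)}`.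
(The index `a : Fin (n-1)` encodes the root index `a+1 ∈ {1,…,n-1}`, and
`∑_k min(j,k) m_k^{(b)}` is computed as the sum of `min(j, length)` over the
parts of `ν^{(b)}`.) -/
def vac (n L : ℕ) (r s : Fin L → ℕ) (ν : RCConf n) (a : Fin (n - 1)) (j : ℕ) : ℤ :=
  (∑ i, if r i = a.1 + 1 then (min j (s i) : ℤ) else 0)
    - ∑ b : Fin (n - 1), cartan (a.1 + 1) (b.1 + 1) *
        ((ν b).map fun p => (min j p.1 : ℤ)).sum

/-- The size constraint `|ν^{(a)}| = ∑_{i=1}^L s_i min(r_i,a) − ∑_{j=1}^{a} λ_j`. -/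
def sizeEq (n L : ℕ) (r s : Fin L → ℕ) (lam : Fin n → ℤ) (ν : RCConf n) : Prop :=
  ∀ a : Fin (n - 1),
    ((ν a).map fun p => (p.1 : ℤ)).sum
      = (∑ i, (s i : ℤ) * min (r i : ℤ) (a.1 + 1))
        - ∑ k : Fin n, (if k.1 ≤ a.1 then lam k else 0)

/-- `IsURC n L r s M lam ν` : `ν` is an unrestricted rigged configuration in
`RC(λ,B)`: all parts have positive length, the sizes `|ν^{(a)}|` are as
prescribed by `λ` and `B`, and each rigging `x` of a part of length `j` of
`ν^{(a)}` satisfies `M_j^{(a)} ≤ x ≤ p_j^{(a)}(ν)` where `M` is the given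
lower bound (for the Deka–Schilling lower bound this is exactly the set of
unrestricted rigged configurations). -/
def IsURC (n L : ℕ) (r s : Fin L → ℕ) (M : Fin (n - 1) → ℕ → ℤ) (lam : Fin n → ℤ)
    (ν : RCConf n) : Prop :=
  (∀ a, ∀ p ∈ ν a, 1 ≤ p.1) ∧ sizeEq n L r s lam ν ∧
    (∀ a, ∀ p ∈ ν a, M a p.1 ≤ p.2 ∧ p.2 ≤ vac n L r s ν a p.1)

/-- `cc(ν) = ½ ∑_{a,b} ∑_{j,k} (α_a|α_b) min(j,k) m_j^{(a)} m_k^{(b)}`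
(the double sum is always even, so integer division by 2 is exact). -/
def ccShape (n : ℕ) (ν : RCConf n) : ℤ :=
  (∑ a : Fin (n - 1), ∑ b : Fin (n - 1), cartan (a.1 + 1) (b.1 + 1) *
      ((ν a).map fun p => ((ν b).map fun q => (min p.1 q.1 : ℤ)).sum).sum) / 2

/-- The cocharge `cc(ν,J) = cc(ν) + |J|`, where `|J|` is the sum of all riggings. -/
def cc (n : ℕ) (ν : RCConf n) : ℤ :=
  ccShape n ν + ∑ a : Fin (n - 1), ((ν a).map Prod.snd).sum


lemma min_second_diff (j k : ℕ) (hj : 1 ≤ j) (hk : 1 ≤ k) :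
    -min (((j-1:ℕ)):ℤ) (k:ℤ) + 2 * min (j:ℤ) (k:ℤ) - min (((j+1:ℕ)):ℤ) (k:ℤ)
      = if k = j then 1 else 0 := by
  split <;> omega

lemma comb_finset {α : Type*} (t : Finset α) (f g h : α → ℤ) :
    -(∑ x ∈ t, f x) + 2*(∑ x ∈ t, g x) - ∑ x ∈ t, h x
      = ∑ x ∈ t, (-(f x) + 2*g x - h x) := by
  simp [Finset.sum_add_distrib, Finset.sum_sub_distrib, Finset.mul_sum, neg_add]

lemma comb_multiset (m : Multiset (ℕ×ℤ)) (f g h : ℕ×ℤ → ℤ) :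
    -((m.map f).sum) + 2*((m.map g).sum) - (m.map h).sum
      = (m.map fun x => -(f x) + 2*g x - h x).sum := by
  induction m using Multiset.induction with
  | empty => simp
  | cons x t ih => simp [Multiset.map_cons, Multiset.sum_cons, ← ih]; ring

lemma sum_map_ite (m : Multiset (ℕ×ℤ)) (j : ℕ) :
    (m.map fun p => if p.1 = j then (1:ℤ) else 0).sum
      = (((m.filter fun p => p.1 = j).card : ℕ) : ℤ) := by
  induction m using Multiset.induction with
  | empty => simp
  | cons x t ih =>
    by_cases h : x.1 = j <;> simp [h, Multiset.filter_cons, ih] <;> push_cast <;> ring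

/-- Convexity of vacancy numbers: for an unrestricted rigged
configuration with vacancy numbers `p_j^{(a)}`, if the partition `ν^{(a)}` has
no part of length `j` (i.e. `m_j^{(a)} = 0`), then
`p_j^{(a)} ≥ min(p_{j-1}^{(a)}, p_{j+1}^{(a)})`; more precisely,
`−p_{j-1}^{(a)} + 2 p_j^{(a)} − p_{j+1}^{(a)} ≥ −∑_{i=1}^L δ_{a,r_i} δ_{j,s_i}`
whenever `m_j^{(a)} = 0`. -/
theorem vacancy_numbers_convex
    (n L : ℕ) (hn : 2 ≤ n) (r s : Fin L → ℕ)
    (hr : ∀ i, 1 ≤ r i ∧ r i ≤ n - 1) (hs : ∀ i, 1 ≤ s i)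
    (ν : RCConf n) (hpos : ∀ a, ∀ p ∈ ν a, 1 ≤ p.1)
    (a : Fin (n - 1)) (j : ℕ) (hj : 1 ≤ j)
    (hm : ((ν a).filter fun p => p.1 = j).card = 0) :
    min (vac n L r s ν a (j - 1)) (vac n L r s ν a (j + 1)) ≤ vac n L r s ν a j ∧
    -(∑ i, if r i = a.1 + 1 ∧ s i = j then (1 : ℤ) else 0)
      ≤ -(vac n L r s ν a (j - 1)) + 2 * vac n L r s ν a j - vac n L r s ν a (j + 1) := by
  -- abbreviations
  have hD : -(vac n L r s ν a (j-1)) + 2 * vac n L r s ν a j - vac n L r s ν a (j+1)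
      = (∑ i, if r i = a.1 + 1 ∧ s i = j then (1:ℤ) else 0)
        - ∑ b : Fin (n-1), cartan (a.1+1) (b.1+1) *
            ((((ν b).filter fun p => p.1 = j).card : ℕ) : ℤ) := by
    simp only [vac]
    have hA : -(∑ i, if r i = a.1 + 1 then (min ((j-1:ℕ):ℤ) (s i) : ℤ) else 0)
        + 2*(∑ i, if r i = a.1 + 1 then (min (j:ℤ) (s i) : ℤ) else 0)
        - (∑ i, if r i = a.1 + 1 then (min ((j+1:ℕ):ℤ) (s i) : ℤ) else 0)
        = ∑ i, if r i = a.1 + 1 ∧ s i = j then (1:ℤ) else 0 := by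
      rw [comb_finset]
      refine Finset.sum_congr rfl fun i _ => ?_
      by_cases h : r i = a.1 + 1
      · simp only [h, if_true, true_and, min_second_diff j (s i) hj (hs i)]
      · simp [h]
    have hB : ∀ b : Fin (n-1),
        -(cartan (a.1+1) (b.1+1) * ((ν b).map fun p => (min ((j-1:ℕ):ℤ) (p.1:ℤ))).sum)
        + 2*(cartan (a.1+1) (b.1+1) * ((ν b).map fun p => (min (j:ℤ) (p.1:ℤ))).sum)
        - (cartan (a.1+1) (b.1+1) * ((ν b).map fun p => (min ((j+1:ℕ):ℤ) (p.1:ℤ))).sum)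
        = cartan (a.1+1) (b.1+1) * ((((ν b).filter fun p => p.1 = j).card : ℕ) : ℤ) := by
      intro b
      have : -(((ν b).map fun p => (min ((j-1:ℕ):ℤ) (p.1:ℤ))).sum)
          + 2*(((ν b).map fun p => (min (j:ℤ) (p.1:ℤ))).sum)
          - (((ν b).map fun p => (min ((j+1:ℕ):ℤ) (p.1:ℤ))).sum)
          = (((ν b).filter fun p => p.1 = j).card : ℕ) := by
        rw [comb_multiset, ← sum_map_ite]
        refine congrArg _ (Multiset.map_congr rfl fun p hp => ?_)
        exact min_second_diff j p.1 hj (hpos b p hp)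
      linear_combination cartan (a.1+1) (b.1+1) * this
    calc -((∑ i, if r i = a.1 + 1 then (min ((j-1:ℕ):ℤ) (s i) : ℤ) else 0)
            - ∑ b : Fin (n-1), cartan (a.1+1) (b.1+1) *
                ((ν b).map fun p => (min ((j-1:ℕ):ℤ) (p.1:ℤ))).sum)
          + 2*((∑ i, if r i = a.1 + 1 then (min (j:ℤ) (s i) : ℤ) else 0)
            - ∑ b : Fin (n-1), cartan (a.1+1) (b.1+1) *
                ((ν b).map fun p => (min (j:ℤ) (p.1:ℤ))).sum)
          - ((∑ i, if r i = a.1 + 1 then (min ((j+1:ℕ):ℤ) (s i) : ℤ) else 0)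
            - ∑ b : Fin (n-1), cartan (a.1+1) (b.1+1) *
                ((ν b).map fun p => (min ((j+1:ℕ):ℤ) (p.1:ℤ))).sum)
        = (-(∑ i, if r i = a.1 + 1 then (min ((j-1:ℕ):ℤ) (s i) : ℤ) else 0)
            + 2*(∑ i, if r i = a.1 + 1 then (min (j:ℤ) (s i) : ℤ) else 0)
            - (∑ i, if r i = a.1 + 1 then (min ((j+1:ℕ):ℤ) (s i) : ℤ) else 0))
          - ∑ b : Fin (n-1),
              (-(cartan (a.1+1) (b.1+1) * ((ν b).map fun p => (min ((j-1:ℕ):ℤ) (p.1:ℤ))).sum)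
              + 2*(cartan (a.1+1) (b.1+1) * ((ν b).map fun p => (min (j:ℤ) (p.1:ℤ))).sum)
              - (cartan (a.1+1) (b.1+1) * ((ν b).map fun p => (min ((j+1:ℕ):ℤ) (p.1:ℤ))).sum)) := by
          rw [← comb_finset]; ring
      _ = _ := by
          rw [hA, Finset.sum_congr rfl fun b _ => hB b]
  have hS : (0:ℤ) ≤ ∑ i, if r i = a.1 + 1 ∧ s i = j then (1:ℤ) else 0 :=
    Finset.sum_nonneg fun i _ => by positivity
  have hT : (∑ b : Fin (n-1), cartan (a.1+1) (b.1+1) *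
      ((((ν b).filter fun p => p.1 = j).card : ℕ) : ℤ)) ≤ 0 := by
    refine Finset.sum_nonpos fun b _ => ?_
    by_cases hb : b = a
    · subst hb; rw [hm]; simp
    · have hne : a.1 + 1 ≠ b.1 + 1 := by
        intro h; exact hb (Fin.ext (by omega)).symm
      have : cartan (a.1+1) (b.1+1) ≤ 0 := by
        unfold cartan; rw [if_neg hne]; split <;> norm_num
      exact mul_nonpos_of_nonpos_of_nonneg this (by positivity)
  constructor
  · have : 0 ≤ -(vac n L r s ν a (j-1)) + 2 * vac n L r s ν a j - vac n L r s ν a (j+1) := by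
      rw [hD]; linarith
    omega
  · rw [hD]; linarith
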